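/- The set S₁ = {(x,y) ∈ ℤ × ℤ : x and y are both even} is a proper semiperfect dominating set of the triangular lattice Δ; S₁ is an independent set of Δ; the subgraph of Δ induced on the complement of S₁ is 4-regular and connected; and the minimum graph distance between distinct vertices of S₁ is 2 (any two distinct vertices of S₁ are at distance at least 2, and some pair is at distance exactly 2). -/

import Mathlib

open SimpleGraph Set

def triDirs : Set (ℤ × ℤ) := {(1,0), (-1,0), (0,1), (0,-1), (1,-1), (-1,1)}

def triLattice : SimpleGraph (ℤ × ℤ) :=
  SimpleGraph.fromRel (fun u v => u - v ∈ triDirs)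

def torLattice (m n : ℕ) : SimpleGraph (ZMod m × ZMod n) :=
  SimpleGraph.fromRel (fun u v =>
    ∃ d ∈ triDirs, u - v = ((d.1 : ZMod m), (d.2 : ZMod n)))

def IsPDS {V : Type*} (G : SimpleGraph V) (S : Set V) : Prop :=
  ∀ v ∉ S, ∃! u, u ∈ S ∧ G.Adj v u

def IsSPDS {V : Type*} (G : SimpleGraph V) (S : Set V) : Prop :=
  ∀ v ∉ S, {u | u ∈ S ∧ G.Adj v u}.ncard = 2

def IsQPDS {V : Type*} (G : SimpleGraph V) (S : Set V) : Prop :=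
  ∀ v ∉ S, {u | u ∈ S ∧ G.Adj v u}.ncard = 1 ∨ {u | u ∈ S ∧ G.Adj v u}.ncard = 2

def IsK2QPDS {V : Type*} (G : SimpleGraph V) (S : Set V) : Prop :=
  IsQPDS G S ∧ ∀ v ∈ S, {u | u ∈ S ∧ G.Adj v u}.ncard = 1

def IsK3QPDS {V : Type*} (G : SimpleGraph V) (S : Set V) : Prop :=
  IsQPDS G S ∧ ∀ v ∈ S, ∃ a b, a ≠ b ∧ G.Adj a b ∧ {u | u ∈ S ∧ G.Adj v u} = {a, b}

def IsIndep {V : Type*} (G : SimpleGraph V) (S : Set V) : Prop :=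
  ∀ a ∈ S, ∀ b ∈ S, ¬ G.Adj a b

/-- The set of points with both coordinates even. -/
def spdsOne : Set (ℤ × ℤ) := {p | Even p.1 ∧ Even p.2}

lemma mem_triDirs {p : ℤ × ℤ} : p ∈ triDirs ↔
    (p.1 = 1 ∧ p.2 = 0) ∨ (p.1 = -1 ∧ p.2 = 0) ∨ (p.1 = 0 ∧ p.2 = 1) ∨
    (p.1 = 0 ∧ p.2 = -1) ∨ (p.1 = 1 ∧ p.2 = -1) ∨ (p.1 = -1 ∧ p.2 = 1) := by
  simp [triDirs, Prod.ext_iff]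

lemma adj_iff {u v : ℤ × ℤ} : triLattice.Adj u v ↔
    ((u.1 - v.1 = 1 ∧ u.2 - v.2 = 0) ∨ (u.1 - v.1 = -1 ∧ u.2 - v.2 = 0) ∨
     (u.1 - v.1 = 0 ∧ u.2 - v.2 = 1) ∨ (u.1 - v.1 = 0 ∧ u.2 - v.2 = -1) ∨
     (u.1 - v.1 = 1 ∧ u.2 - v.2 = -1) ∨ (u.1 - v.1 = -1 ∧ u.2 - v.2 = 1)) := by
  rw [triLattice, fromRel_adj]
  simp only [mem_triDirs, Prod.fst_sub, Prod.snd_sub, ne_eq, Prod.ext_iff, not_and]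
  omega

lemma spds_pair {v : ℤ × ℤ} (hv : v ∉ spdsOne) :
    ∃ a b : ℤ × ℤ, a ≠ b ∧ {u | u ∈ spdsOne ∧ triLattice.Adj v u} = {a, b} := by
  simp only [spdsOne, Set.mem_setOf_eq, not_and, Int.even_iff] at hv
  have h1 : v.1 % 2 = 0 ∨ v.1 % 2 = 1 := Int.emod_two_eq_zero_or_one v.1
  have h2 : v.2 % 2 = 0 ∨ v.2 % 2 = 1 := Int.emod_two_eq_zero_or_one v.2
  rcases h1 with h1 | h1 <;> rcases h2 with h2 | h2
  · exact absurd h2 (hv h1)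
  · -- x even, y odd : neighbors (v.1, v.2+1), (v.1, v.2-1)
    refine ⟨(v.1, v.2 + 1), (v.1, v.2 - 1), by simp only [ne_eq, Prod.mk.injEq, not_and]; omega, ?_⟩
    ext u
    simp only [Set.mem_setOf_eq, spdsOne, adj_iff, Int.even_iff, Set.mem_insert_iff,
      Set.mem_singleton_iff, Prod.ext_iff]
    omega
  · refine ⟨(v.1 + 1, v.2), (v.1 - 1, v.2), by simp only [ne_eq, Prod.mk.injEq, not_and]; omega, ?_⟩
    ext u
    simp only [Set.mem_setOf_eq, spdsOne, adj_iff, Int.even_iff, Set.mem_insert_iff,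
      Set.mem_singleton_iff, Prod.ext_iff]
    omega
  · refine ⟨(v.1 + 1, v.2 - 1), (v.1 - 1, v.2 + 1), by simp only [ne_eq, Prod.mk.injEq, not_and]; omega, ?_⟩
    ext u
    simp only [Set.mem_setOf_eq, spdsOne, adj_iff, Int.even_iff, Set.mem_insert_iff,
      Set.mem_singleton_iff, Prod.ext_iff]
    omega

lemma ncard4 {α : Type*} {a b c d : α} (h1 : a ≠ b) (h2 : a ≠ c) (h3 : a ≠ d)
    (h4 : b ≠ c) (h5 : b ≠ d) (h6 : c ≠ d) : ({a, b, c, d} : Set α).ncard = 4 := by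
  rw [Set.ncard_insert_of_notMem (by simp [h1, h2, h3]),
    Set.ncard_insert_of_notMem (by simp [h4, h5]), Set.ncard_pair h6]

lemma regular4 (v : ↥(spdsOneᶜ)) :
    ((triLattice.induce spdsOneᶜ).neighborSet v).ncard = 4 := by
  have himg : Subtype.val '' ((triLattice.induce spdsOneᶜ).neighborSet v) =
      {u | u ∈ spdsOneᶜ ∧ triLattice.Adj ↑v u} := by
    ext u
    simp only [Set.mem_image, mem_neighborSet, comap_adj, Set.mem_setOf_eq]
    constructor
    · rintro ⟨⟨w, hw⟩, hadj, rfl⟩; exact ⟨hw, hadj⟩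
    · rintro ⟨hu, hadj⟩; exact ⟨⟨u, hu⟩, hadj, rfl⟩
  have := Set.ncard_image_of_injective ((triLattice.induce spdsOneᶜ).neighborSet v)
    Subtype.val_injective
  rw [himg] at this
  rw [← this]
  obtain ⟨⟨x, y⟩, hv⟩ := v
  simp only [Set.mem_compl_iff, spdsOne, Set.mem_setOf_eq, not_and, Int.even_iff] at hv
  have h1 : x % 2 = 0 ∨ x % 2 = 1 := Int.emod_two_eq_zero_or_one x
  have h2 : y % 2 = 0 ∨ y % 2 = 1 := Int.emod_two_eq_zero_or_one y
  rcases h1 with h1 | h1 <;> rcases h2 with h2 | h2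
  · exact absurd h2 (hv h1)
  · -- x even, y odd: non-S neighbors (x±1,y),(x+1,y-1),(x-1,y+1)
    have hset : {u | u ∈ spdsOneᶜ ∧ triLattice.Adj (x, y) u} =
        {(x + 1, y), (x - 1, y), (x + 1, y - 1), (x - 1, y + 1)} := by
      ext u
      simp only [Set.mem_setOf_eq, Set.mem_compl_iff, spdsOne, adj_iff, Int.even_iff,
        Set.mem_insert_iff, Set.mem_singleton_iff, Prod.ext_iff, not_and]
      omega
    rw [hset]
    exact ncard4 (by simp only [ne_eq, Prod.mk.injEq, not_and]; omega) (by simp only [ne_eq, Prod.mk.injEq, not_and]; omega)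
      (by simp only [ne_eq, Prod.mk.injEq, not_and]; omega) (by simp only [ne_eq, Prod.mk.injEq, not_and]; omega)
      (by simp only [ne_eq, Prod.mk.injEq, not_and]; omega) (by simp only [ne_eq, Prod.mk.injEq, not_and]; omega)
  · have hset : {u | u ∈ spdsOneᶜ ∧ triLattice.Adj (x, y) u} =
        {(x, y + 1), (x, y - 1), (x + 1, y - 1), (x - 1, y + 1)} := by
      ext u
      simp only [Set.mem_setOf_eq, Set.mem_compl_iff, spdsOne, adj_iff, Int.even_iff,
        Set.mem_insert_iff, Set.mem_singleton_iff, Prod.ext_iff, not_and]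
      omega
    rw [hset]
    exact ncard4 (by simp only [ne_eq, Prod.mk.injEq, not_and]; omega) (by simp only [ne_eq, Prod.mk.injEq, not_and]; omega)
      (by simp only [ne_eq, Prod.mk.injEq, not_and]; omega) (by simp only [ne_eq, Prod.mk.injEq, not_and]; omega)
      (by simp only [ne_eq, Prod.mk.injEq, not_and]; omega) (by simp only [ne_eq, Prod.mk.injEq, not_and]; omega)
  · have hset : {u | u ∈ spdsOneᶜ ∧ triLattice.Adj (x, y) u} =
        {(x + 1, y), (x - 1, y), (x, y + 1), (x, y - 1)} := by
      ext u
      simp only [Set.mem_setOf_eq, Set.mem_compl_iff, spdsOne, adj_iff, Int.even_iff,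
        Set.mem_insert_iff, Set.mem_singleton_iff, Prod.ext_iff, not_and]
      omega
    rw [hset]
    exact ncard4 (by simp only [ne_eq, Prod.mk.injEq, not_and]; omega) (by simp only [ne_eq, Prod.mk.injEq, not_and]; omega)
      (by simp only [ne_eq, Prod.mk.injEq, not_and]; omega) (by simp only [ne_eq, Prod.mk.injEq, not_and]; omega)
      (by simp only [ne_eq, Prod.mk.injEq, not_and]; omega) (by simp only [ne_eq, Prod.mk.injEq, not_and]; omega)

lemma memC {p : ℤ × ℤ} (h : p.1 % 2 = 1 ∨ p.2 % 2 = 1) : p ∈ spdsOneᶜ := by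
  simp only [Set.mem_compl_iff, spdsOne, Set.mem_setOf_eq, not_and, Int.even_iff]
  omega

/-- Reachability in the induced graph, phrased over ambient points. -/
def RC (a b : ℤ × ℤ) : Prop :=
  ∀ (ha : a ∈ spdsOneᶜ) (hb : b ∈ spdsOneᶜ),
    (triLattice.induce spdsOneᶜ).Reachable ⟨a, ha⟩ ⟨b, hb⟩

lemma RC.refl (a : ℤ × ℤ) : RC a a := fun _ _ => Reachable.refl _

lemma RC.symm {a b : ℤ × ℤ} (h : RC a b) : RC b a := fun hb ha => (h ha hb).symm

lemma RC.trans {a b c : ℤ × ℤ} (hb : b ∈ spdsOneᶜ) (h1 : RC a b) (h2 : RC b c) :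
    RC a c := fun ha hc => (h1 ha hb).trans (h2 hb hc)

lemma RC.adj {a b : ℤ × ℤ} (h : triLattice.Adj a b) : RC a b :=
  fun _ _ => SimpleGraph.Adj.reachable h

lemma rc_col {x : ℤ} (hx : x % 2 = 1) (y : ℤ) : RC (x, 0) (x, y) := by
  induction y using Int.induction_on with
  | zero => exact RC.refl _
  | succ k ih => exact ih.trans (memC (Or.inl hx)) (RC.adj (adj_iff.mpr (by omega)))
  | pred k ih => exact ih.trans (memC (Or.inl hx)) (RC.adj (adj_iff.mpr (by omega)))

lemma rc_row (k : ℤ) : RC (1, 0) (2 * k + 1, 0) := by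
  induction k using Int.induction_on with
  | zero => exact (by norm_num : ((2:ℤ) * 0 + 1, (0:ℤ)) = (1, 0)) ▸ RC.refl ((1:ℤ), (0:ℤ))
  | succ k ih =>
    have s1 : RC (2 * k + 1, 0) (2 * k + 2, -1) := RC.adj (adj_iff.mpr (by omega))
    have s2 : RC (2 * k + 2, -1) (2 * k + 3, -1) := RC.adj (adj_iff.mpr (by omega))
    have s3 : RC (2 * k + 3, -1) (2 * k + 3, 0) := RC.adj (adj_iff.mpr (by omega))
    have : RC (1, 0) (2 * k + 3, 0) :=
      ((ih.trans (memC (by omega)) s1).trans (memC (by omega)) s2).trans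
        (memC (by omega)) s3
    convert this using 2 <;> ring
  | pred k ih =>
    have s1 : RC (2 * (-k) + 1, 0) (2 * (-k), 1) := RC.adj (adj_iff.mpr (by omega))
    have s2 : RC (2 * (-k), 1) (2 * (-k) - 1, 1) := RC.adj (adj_iff.mpr (by omega))
    have s3 : RC (2 * (-k) - 1, 1) (2 * (-k) - 1, 0) := RC.adj (adj_iff.mpr (by omega))
    have : RC (1, 0) (2 * (-k) - 1, 0) :=
      ((ih.trans (memC (by omega)) s1).trans (memC (by omega)) s2).trans
        (memC (by omega)) s3
    convert this using 2 <;> ring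

lemma rc_main {v : ℤ × ℤ} (hv : v ∈ spdsOneᶜ) : RC (1, 0) v := by
  simp only [Set.mem_compl_iff, spdsOne, Set.mem_setOf_eq, not_and, Int.even_iff] at hv
  have h1 : v.1 % 2 = 0 ∨ v.1 % 2 = 1 := Int.emod_two_eq_zero_or_one v.1
  have hveq : v = (v.1, v.2) := rfl
  rcases h1 with h1 | h1
  · -- v.1 even, so v.2 odd; step to (v.1+1, v.2)
    have h2 := hv h1
    have hodd : (v.1 + 1) % 2 = 1 := by omega
    have r1 : RC (1, 0) (v.1 + 1, 0) := by
      have := rc_row ((v.1 + 1 - 1) / 2)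
      have he : 2 * ((v.1 + 1 - 1) / 2) + 1 = v.1 + 1 := by omega
      rwa [he] at this
    have r2 : RC (v.1 + 1, 0) (v.1 + 1, v.2) := rc_col hodd v.2
    have r3 : RC (v.1 + 1, v.2) v := by
      rw [hveq]; exact RC.adj (adj_iff.mpr (by simp))
    exact (r1.trans (memC (Or.inl hodd)) r2).trans (memC (Or.inl hodd)) r3
  · have r1 : RC (1, 0) (v.1, 0) := by
      have := rc_row ((v.1 - 1) / 2)
      have he : 2 * ((v.1 - 1) / 2) + 1 = v.1 := by omega
      rwa [he] at this
    have r2 : RC (v.1, 0) (v.1, v.2) := rc_col h1 v.2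
    have := r1.trans (memC (p := (v.1, 0)) (Or.inl h1)) r2
    rwa [← hveq] at this

lemma connectedC : (triLattice.induce spdsOneᶜ).Connected := by
  rw [connected_iff]
  refine ⟨fun u v => ?_, ⟨⟨(1, 0), memC (by norm_num)⟩⟩⟩
  obtain ⟨u, hu⟩ := u
  obtain ⟨v, hv⟩ := v
  exact ((rc_main hu) (memC (by norm_num)) hu).symm.trans
    ((rc_main hv) (memC (by norm_num)) hv)

lemma tri_reach (u v : ℤ × ℤ) : triLattice.Reachable u v := by
  have horiz : ∀ (x y z : ℤ), triLattice.Reachable (x, y) (x + z, y) := by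
    intro x y z
    induction z using Int.induction_on with
    | zero => simpa using Reachable.refl ((x, y) : ℤ × ℤ)
    | succ k ih => exact ih.trans (SimpleGraph.Adj.reachable (adj_iff.mpr (by omega)))
    | pred k ih => exact ih.trans (SimpleGraph.Adj.reachable (adj_iff.mpr (by omega)))
  have vert : ∀ (x y z : ℤ), triLattice.Reachable (x, y) (x, y + z) := by
    intro x y z
    induction z using Int.induction_on with
    | zero => simpa using Reachable.refl ((x, y) : ℤ × ℤ)
    | succ k ih => exact ih.trans (SimpleGraph.Adj.reachable (adj_iff.mpr (by omega)))
    | pred k ih => exact ih.trans (SimpleGraph.Adj.reachable (adj_iff.mpr (by omega)))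
  have h1 := horiz u.1 u.2 (v.1 - u.1)
  have h2 := vert v.1 u.2 (v.2 - u.2)
  simp only [add_sub_cancel] at h1 h2
  exact h1.trans h2

lemma indepS : ∀ a ∈ spdsOne, ∀ b ∈ spdsOne, ¬ triLattice.Adj a b := by
  intro a ha b hb hadj
  simp only [spdsOne, Set.mem_setOf_eq, Int.even_iff] at ha hb
  rw [adj_iff] at hadj
  omega

lemma dist_ge {a : ℤ × ℤ} (ha : a ∈ spdsOne) {b : ℤ × ℤ} (hb : b ∈ spdsOne)
    (hab : a ≠ b) : 2 ≤ triLattice.dist a b := by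
  have hr : triLattice.Reachable a b := tri_reach a b
  have h0 : triLattice.dist a b ≠ 0 :=
    SimpleGraph.dist_ne_zero_iff_ne_and_reachable.mpr ⟨hab, hr⟩
  have h1 : triLattice.dist a b ≠ 1 :=
    fun h => indepS a ha b hb (SimpleGraph.dist_eq_one_iff_adj.mp h)
  omega

lemma mem_spdsOne_00 : ((0 : ℤ), (0 : ℤ)) ∈ spdsOne := ⟨Even.zero, Even.zero⟩
lemma mem_spdsOne_20 : ((2 : ℤ), (0 : ℤ)) ∈ spdsOne := ⟨⟨1, by norm_num⟩, Even.zero⟩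
lemma ne_00_20 : ((0 : ℤ), (0 : ℤ)) ≠ ((2 : ℤ), (0 : ℤ)) := by decide

lemma dist_pair : triLattice.dist ((0 : ℤ), (0 : ℤ)) ((2 : ℤ), (0 : ℤ)) = 2 := by
  have hle : triLattice.dist ((0 : ℤ), (0 : ℤ)) ((2 : ℤ), (0 : ℤ)) ≤ 2 := by
    have h := SimpleGraph.dist_le
      (Walk.cons (adj_iff (u := ((0:ℤ),(0:ℤ))) (v := ((1:ℤ),(0:ℤ))) |>.mpr (by norm_num))
        (Walk.cons (adj_iff (u := ((1:ℤ),(0:ℤ))) (v := ((2:ℤ),(0:ℤ))) |>.mpr (by norm_num))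
          (Walk.nil (G := triLattice))))
    simpa using h
  have hge := dist_ge mem_spdsOne_00 mem_spdsOne_20 ne_00_20
  omega

/-- `spdsOne` is a proper SPDS of the triangular lattice which is independent; the
subgraph induced on its complement is 4-regular and connected; and the minimum
distance between its distinct vertices is 2. -/
theorem isolated_SPDS_properties :
    (IsSPDS triLattice spdsOne ∧ spdsOne ≠ Set.univ) ∧
    IsIndep triLattice spdsOne ∧
    (∀ v : ↥(spdsOneᶜ), ((triLattice.induce spdsOneᶜ).neighborSet v).ncard = 4) ∧
    (triLattice.induce spdsOneᶜ).Connected ∧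
    (∀ a ∈ spdsOne, ∀ b ∈ spdsOne, a ≠ b → 2 ≤ triLattice.dist a b) ∧
    (∃ a ∈ spdsOne, ∃ b ∈ spdsOne, a ≠ b ∧ triLattice.dist a b = 2) := by
  refine ⟨⟨?_, ?_⟩, indepS, regular4, connectedC,
    fun a ha b hb hab => dist_ge ha hb hab, ?_⟩
  · intro v hv
    obtain ⟨a, b, hab, hset⟩ := spds_pair hv
    rw [hset, Set.ncard_pair hab]
  · intro h
    have : ((1 : ℤ), (0 : ℤ)) ∈ spdsOne := h ▸ Set.mem_univ _
    simp [spdsOne, Int.even_iff] at this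
  · exact ⟨_, mem_spdsOne_00, _, mem_spdsOne_20, ne_00_20, dist_pair⟩
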